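/- arXiv:2011.06061 — 4 statements merged into one kernel-verified Lean document; each statement's English description precedes it below -/
import Mathlib

section
/- Let M ~ N(μ, σ²) and let Φ denote the standard normal CDF. For any constants c, b ∈ ℝ, E[Φ(c + b·M)] = Φ((c + b·μ)/√(1 + b²σ²)). -/
open MeasureTheory ProbabilityTheory

open Real
open scoped ENNReal NNReal

lemma key_conv (mm u b : ℝ) (v : NNReal) (hv : v ≠ 0) :
    ∫ x, gaussianPDFReal 0 1 (u + b * x) * gaussianPDFReal mm v x =
      gaussianPDFReal (-(b * mm)) ⟨1 + b ^ 2 * v, by positivity⟩ u := by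
  have hv' : (0:ℝ) < v := lt_of_le_of_ne v.coe_nonneg (by exact_mod_cast (Ne.symm hv))
  have hτ : (0:ℝ) < 1 + b ^ 2 * v := by positivity
  set α : ℝ := (1 + b ^ 2 * v) / (2 * v) with hα
  have hαpos : 0 < α := by positivity
  set δ : ℝ := (mm - v * u * b) / (1 + b ^ 2 * v) with hδ
  set K : ℝ := -(u + b * mm) ^ 2 / (2 * (1 + b ^ 2 * v)) with hK
  have hfun : (fun x => gaussianPDFReal 0 1 (u + b * x) * gaussianPDFReal mm v x) =
      fun x => ((√(2 * π * 1))⁻¹ * (√(2 * π * v))⁻¹ * rexp K) * rexp (-α * (x - δ) ^ 2) := by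
    funext x
    simp only [gaussianPDFReal, NNReal.coe_one]
    rw [mul_mul_mul_comm, ← Real.exp_add, mul_assoc ((√(2 * π * 1))⁻¹ * (√(2 * π * (v:ℝ)))⁻¹), ← Real.exp_add]
    congr 2
    have h1 : (v:ℝ) ≠ 0 := ne_of_gt hv'
    have h2 : (1 + b ^ 2 * (v:ℝ)) ≠ 0 := ne_of_gt hτ
    rw [hα, hδ, hK]
    field_simp
    ring
  rw [hfun, integral_const_mul]
  have : ∫ x : ℝ, rexp (-α * (x - δ) ^ 2) = ∫ x : ℝ, rexp (-α * x ^ 2) :=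
    integral_sub_right_eq_self (fun x => rexp (-α * x ^ 2)) δ
  rw [this, integral_gaussian]
  have hπα : π / α = (2 * π * v) / (1 + b ^ 2 * v) := by
    rw [hα]; field_simp
  rw [hπα, Real.sqrt_div' _ (by positivity)]
  simp only [gaussianPDFReal, NNReal.coe_mk, mul_one]
  rw [hK]
  have e1 : -(u - -(b*mm))^2 = -(u + b*mm)^2 := by ring
  rw [e1]
  have s1 : √(2*π*(1+b^2*(v:ℝ))) = √(2*π) * √(1+b^2*(v:ℝ)) := Real.sqrt_mul (by positivity) _
  change _ = (√(2 * π * (1 + b ^ 2 * (v:ℝ))))⁻¹ * rexp (-(u + b * mm) ^ 2 / (2 * (1 + b ^ 2 * (v:ℝ))))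
  rw [s1]
  have n1 : √(2*π*(v:ℝ)) ≠ 0 := by positivity
  have n2 : √(1+b^2*(v:ℝ)) ≠ 0 := by positivity
  have n3 : √(2*π) ≠ 0 := by positivity
  field_simp

theorem gaussian_probit_identity (m : ℝ) (v : NNReal) (c b : ℝ)
    (Φ : ℝ → ℝ)
    (hΦ : ∀ t, Φ t = ∫ s in Set.Iic t, (2 * Real.pi) ^ (-(1:ℝ)/2) * Real.exp (-s ^ 2 / 2)) :
    ∫ x, Φ (c + b * x) ∂(gaussianReal m v) =
      Φ ((c + b * m) / Real.sqrt (1 + b ^ 2 * (v : ℝ))) := by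
  have hg : (fun s : ℝ => (2 * Real.pi) ^ (-(1:ℝ)/2) * Real.exp (-s ^ 2 / 2)) =
      gaussianPDFReal 0 1 := by
    funext s
    rw [gaussianPDFReal]
    rw [neg_div, Real.rpow_neg (by positivity), ← Real.sqrt_eq_rpow]
    norm_num
  have hΦ' : ∀ t, Φ t = ∫ s in Set.Iic t, gaussianPDFReal 0 1 s := by
    intro t
    rw [hΦ t]
    exact congrArg (fun f : ℝ → ℝ => ∫ s in Set.Iic t, f s) hg
  have hΦnn : ∀ t, 0 ≤ Φ t := fun t => by
    rw [hΦ' t]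
    exact setIntegral_nonneg measurableSet_Iic (fun s _ => gaussianPDFReal_nonneg 0 1 s)
  have hΦmono : Monotone Φ := by
    intro t₁ t₂ h
    rw [hΦ' t₁, hΦ' t₂]
    exact setIntegral_mono_set ((integrable_gaussianPDFReal 0 1).restrict)
      (ae_of_all _ (gaussianPDFReal_nonneg 0 1)) ((Set.Iic_subset_Iic.2 h).eventuallyLE)
  have hΦmeas : Measurable Φ := hΦmono.measurable
  by_cases hv : v = 0
  · subst hv
    rw [gaussianReal_zero_var, integral_dirac]
    norm_num
  -- main case
  have hvpos : (0:ℝ) < v := lt_of_le_of_ne v.coe_nonneg (by exact_mod_cast (Ne.symm hv))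
  have hτpos : (0:ℝ) < 1 + b ^ 2 * (v:ℝ) := by positivity
  set τ : ℝ := Real.sqrt (1 + b ^ 2 * (v:ℝ)) with hτdef
  have hτ0 : 0 < τ := Real.sqrt_pos.2 hτpos
  set V2 : NNReal := ⟨1 + b ^ 2 * (v:ℝ), by positivity⟩ with hV2
  have hV2ne : V2 ≠ 0 := by
    intro h
    have h2 := congrArg NNReal.toReal h
    simp only [hV2, NNReal.coe_mk, NNReal.coe_zero] at h2
    exact (ne_of_gt hτpos) h2
  set T : ℝ := (c + b * m) / τ with hT
  have hRHS : Φ T = ((gaussianReal 0 1) (Set.Iic T)).toReal := by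
    rw [gaussianReal_apply_eq_integral 0 one_ne_zero,
      ENNReal.toReal_ofReal (setIntegral_nonneg measurableSet_Iic
        fun s _ => gaussianPDFReal_nonneg 0 1 s), ← hΦ' T]
  have hcb : Measurable fun x : ℝ => c + b * x := (measurable_id.const_mul b).const_add c
  have h1 : ∫ x, Φ (c + b * x) ∂(gaussianReal m v) =
      (∫⁻ x, ENNReal.ofReal (Φ (c + b * x)) ∂(gaussianReal m v)).toReal :=
    integral_eq_lintegral_of_nonneg_ae (ae_of_all _ fun x => hΦnn _)
      ((hΦmeas.comp hcb).aestronglyMeasurable)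
  have h2 : ∀ x : ℝ, ENNReal.ofReal (Φ (c + b * x)) =
      ∫⁻ u, ENNReal.ofReal (gaussianPDFReal 0 1 (u + b * x)) * (Set.Iic c).indicator 1 u := by
    intro x
    rw [hΦ' (c + b * x),
      ofReal_integral_eq_lintegral_ofReal ((integrable_gaussianPDFReal 0 1).restrict)
        (ae_of_all _ (gaussianPDFReal_nonneg 0 1))]
    have hpre : (fun u : ℝ => u + b * x) ⁻¹' (Set.Iic (c + b * x)) = Set.Iic c := by
      ext u; simp
    rw [← (measurePreserving_add_right volume (b*x)).setLIntegral_comp_preimage_emb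
      (MeasurableEquiv.addRight (b*x)).measurableEmbedding, hpre,
      ← lintegral_indicator measurableSet_Iic _]
    congr 1
    funext u
    simp only [Set.indicator_apply, Pi.one_apply]
    split_ifs <;> simp
  set D : ℝ → ℝ≥0∞ := gaussianPDF m v with hD
  have hDne : ∀ x, D x ≠ ∞ := fun x => ENNReal.ofReal_ne_top
  have h3 : ∫⁻ x, ENNReal.ofReal (Φ (c + b * x)) ∂(gaussianReal m v) =
      ∫⁻ x, ∫⁻ u, ENNReal.ofReal (gaussianPDFReal 0 1 (u + b * x))
        * (Set.Iic c).indicator 1 u * D x := by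
    have hmeasg : Measurable fun x : ℝ => ENNReal.ofReal (Φ (c + b * x)) :=
      Measurable.ennreal_ofReal (hΦmeas.comp hcb)
    rw [gaussianReal_of_var_ne_zero m hv,
      lintegral_withDensity_eq_lintegral_mul _ (measurable_gaussianPDF m v) hmeasg]
    congr 1
    funext x
    simp only [Pi.mul_apply]
    rw [h2 x, mul_comm, lintegral_mul_const' (D x) _ (hDne x)]
  have hGmeas : Measurable (Function.uncurry fun x u : ℝ =>
      ENNReal.ofReal (gaussianPDFReal 0 1 (u + b * x)) * (Set.Iic c).indicator 1 u * D x) := by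
    refine Measurable.mul (Measurable.mul ?_ ?_) ?_
    · exact ((measurable_gaussianPDFReal 0 1).comp
        (measurable_snd.add (measurable_fst.const_mul b))).ennreal_ofReal
    · exact (measurable_one.indicator measurableSet_Iic).comp measurable_snd
    · exact (measurable_gaussianPDF m v).comp measurable_fst
  have h4 : (∫⁻ x, ∫⁻ u, ENNReal.ofReal (gaussianPDFReal 0 1 (u + b * x))
        * (Set.Iic c).indicator 1 u * D x) =
      ∫⁻ u, ∫⁻ x, ENNReal.ofReal (gaussianPDFReal 0 1 (u + b * x))
        * (Set.Iic c).indicator 1 u * D x :=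
    lintegral_lintegral_swap hGmeas.aemeasurable
  have hindne : ∀ u : ℝ, (Set.Iic c).indicator (1 : ℝ → ℝ≥0∞) u ≠ ∞ := by
    intro u; simp only [Set.indicator_apply, Pi.one_apply]; split_ifs <;> simp
  have h5 : ∀ u : ℝ, (∫⁻ x, ENNReal.ofReal (gaussianPDFReal 0 1 (u + b * x))
        * (Set.Iic c).indicator 1 u * D x) =
      (Set.Iic c).indicator 1 u * ENNReal.ofReal (gaussianPDFReal (-(b*m)) V2 u) := by
    intro u
    have hre : ∀ x : ℝ, ENNReal.ofReal (gaussianPDFReal 0 1 (u + b * x))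
        * (Set.Iic c).indicator 1 u * D x =
        (Set.Iic c).indicator 1 u
          * ENNReal.ofReal (gaussianPDFReal 0 1 (u + b * x) * gaussianPDFReal m v x) := by
      intro x
      rw [hD]
      simp only [gaussianPDF]
      rw [mul_comm (ENNReal.ofReal (gaussianPDFReal 0 1 (u + b * x)))
        ((Set.Iic c).indicator 1 u), mul_assoc,
        ← ENNReal.ofReal_mul (gaussianPDFReal_nonneg 0 1 _)]
    simp_rw [hre]
    rw [lintegral_const_mul' _ _ (hindne u)]
    congr 1
    have hbd : ∀ t : ℝ, ‖gaussianPDFReal 0 1 t‖ ≤ (Real.sqrt (2*π*(1:ℝ)))⁻¹ := by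
      intro t
      rw [Real.norm_eq_abs, abs_of_nonneg (gaussianPDFReal_nonneg 0 1 t), gaussianPDFReal]
      have he : rexp (-(t - 0)^2 / (2*((1:NNReal):ℝ))) ≤ 1 := by
        rw [Real.exp_le_one_iff]
        have h0 : -(t-0)^2 ≤ 0 := by nlinarith [sq_nonneg (t-0)]
        exact div_nonpos_iff.2 (Or.inr ⟨h0, by norm_num⟩)
      calc (Real.sqrt (2*π*((1:NNReal):ℝ)))⁻¹ * rexp (-(t - 0)^2 / (2*((1:NNReal):ℝ)))
          ≤ (Real.sqrt (2*π*((1:NNReal):ℝ)))⁻¹ * 1 :=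
            mul_le_mul_of_nonneg_left he (inv_nonneg.2 (Real.sqrt_nonneg _))
        _ = (Real.sqrt (2*π*(1:ℝ)))⁻¹ := by norm_num
    have hint : Integrable (fun x => gaussianPDFReal 0 1 (u + b * x) * gaussianPDFReal m v x) := by
      refine (integrable_gaussianPDFReal m v).bdd_mul ?_ (ae_of_all _ fun x => hbd (u + b * x))
      exact ((measurable_gaussianPDFReal 0 1).comp
        ((measurable_id.const_mul b).const_add u)).aestronglyMeasurable
    rw [← ofReal_integral_eq_lintegral_ofReal hint
      (ae_of_all _ fun x => mul_nonneg (gaussianPDFReal_nonneg 0 1 _)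
        (gaussianPDFReal_nonneg m v _)), key_conv m u b v hv]
  have h6 : (∫⁻ u, (Set.Iic c).indicator 1 u * ENNReal.ofReal (gaussianPDFReal (-(b*m)) V2 u)) =
      (gaussianReal (-(b*m)) V2) (Set.Iic c) := by
    rw [gaussianReal_apply _ hV2ne, ← lintegral_indicator measurableSet_Iic _]
    congr 1
    funext u
    simp only [Set.indicator_apply, Pi.one_apply, gaussianPDF]
    split_ifs <;> simp
  have h7 : gaussianReal (-(b*m)) V2 (Set.Iic c) = gaussianReal 0 1 (Set.Iic T) := by
    have hmap1 : gaussianReal (-(b*m)) V2 = (gaussianReal 0 V2).map (· + (-(b*m))) := by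
      rw [gaussianReal_map_add_const]; norm_num
    have hmap2 : gaussianReal 0 V2 = (gaussianReal 0 1).map (τ * ·) := by
      rw [gaussianReal_map_const_mul τ]
      congr 1
      · ring
      · rw [mul_one]
        ext
        simp only [NNReal.coe_mk, hV2]
        exact (Real.sq_sqrt hτpos.le).symm
    rw [hmap1, Measure.map_apply (measurable_add_const (-(b*m))) measurableSet_Iic]
    have hp1 : (· + (-(b*m))) ⁻¹' Set.Iic c = Set.Iic (c + b*m) := by
      ext y
      simp only [Set.mem_preimage, Set.mem_Iic]
      constructor <;> intro <;> linarith
    rw [hp1, hmap2, Measure.map_apply (measurable_const_mul τ) measurableSet_Iic]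
    congr 1
    ext y
    simp only [Set.mem_preimage, Set.mem_Iic, hT]
    rw [le_div_iff₀ hτ0, mul_comm]
  rw [h1, h3, h4]
  simp_rw [h5]
  rw [h6, h7, hRHS]
end

section
/- Let σ(t) = 1/(1 + e^{-t}) be the logistic function, let M' and M'' be real random variables with finite moment generating functions at b, and for k ∈ ℝ define e'(k) = E[σ(k + b·M')] and e''(k) = E[σ(k + b·M'')]. Assume e'(k), e''(k) ∈ (0,1) for all k. Then as k → -∞, the odds ratio [e''(k)/(1-e''(k))] / [e'(k)/(1-e'(k))] converges to E[e^{b·M''}]/E[e^{b·M'}]. -/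
open MeasureTheory Filter

lemma rare_key {Ω : Type*} [MeasurableSpace Ω] (μ : Measure Ω) [IsProbabilityMeasure μ]
    (g : Ω → ℝ) (hg : Integrable (fun ω => Real.exp (g ω)) μ)
    (σ : ℝ → ℝ) (hσ : ∀ t, σ t = 1 / (1 + Real.exp (-t))) :
    Tendsto (fun k => (∫ ω, σ (k + g ω) ∂μ) * Real.exp (-k)) atBot
      (nhds (∫ ω, Real.exp (g ω) ∂μ)) := by
  have hid : ∀ k t : ℝ, σ (k + t) * Real.exp (-k) = (Real.exp k + Real.exp (-t))⁻¹ := by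
    intro k t
    rw [hσ]
    have h1 : (0:ℝ) < 1 + Real.exp (-(k+t)) := by positivity
    have h2 : (0:ℝ) < Real.exp k + Real.exp (-t) := by positivity
    field_simp
    rw [mul_add, ← Real.exp_add, ← Real.exp_add,
      show (-k + k : ℝ) = 0 by ring, Real.exp_zero,
      show (-k + -t : ℝ) = -t + -k by ring]
    rw [show (-(k+t) : ℝ) = -t + -k by ring]
  have hgm : AEMeasurable g μ := by
    have := hg.aestronglyMeasurable.aemeasurable
    have : AEMeasurable (fun ω => Real.log (Real.exp (g ω))) μ :=
      Real.measurable_log.comp_aemeasurable this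
    simpa [Real.log_exp] using this
  have heq : ∀ k, (∫ ω, σ (k + g ω) ∂μ) * Real.exp (-k)
      = ∫ ω, (Real.exp k + Real.exp (-(g ω)))⁻¹ ∂μ := by
    intro k
    rw [← integral_mul_const]
    exact integral_congr_ae (Filter.Eventually.of_forall fun ω => hid k (g ω))
  simp only [heq]
  have hmain : Tendsto (fun k => ∫ ω, (Real.exp k + Real.exp (-(g ω)))⁻¹ ∂μ) atBot
      (nhds (∫ ω, Real.exp (g ω) ∂μ)) := by
    apply tendsto_integral_filter_of_dominated_convergence (fun ω => Real.exp (g ω))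
    · filter_upwards with k
      have : AEMeasurable (fun ω => (Real.exp k + Real.exp (-(g ω)))⁻¹) μ := by
        exact (((aemeasurable_const).add (Real.measurable_exp.comp_aemeasurable
          hgm.neg))).inv
      exact this.aestronglyMeasurable
    · filter_upwards with k
      filter_upwards with ω
      have h2 : (0:ℝ) < Real.exp (-(g ω)) := Real.exp_pos _
      have h3 : (0:ℝ) < Real.exp k + Real.exp (-(g ω)) := by positivity
      rw [Real.norm_eq_abs, abs_of_pos (by positivity)]
      rw [inv_le_iff_one_le_mul₀ h3]
      calc (1:ℝ) = Real.exp (-(g ω)) * Real.exp (g ω) := by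
            rw [← Real.exp_add]; simp
        _ ≤ (Real.exp k + Real.exp (-(g ω))) * Real.exp (g ω) := by
            apply mul_le_mul_of_nonneg_right _ (Real.exp_pos _).le
            linarith [Real.exp_pos k]
        _ = Real.exp (g ω) * (Real.exp k + Real.exp (-(g ω))) := mul_comm _ _
    · exact hg
    · filter_upwards with ω
      have h2 : Real.exp (-(g ω)) ≠ 0 := (Real.exp_pos _).ne'
      have : Tendsto (fun k : ℝ => Real.exp k + Real.exp (-(g ω))) atBot
          (nhds (0 + Real.exp (-(g ω)))) :=
        Real.tendsto_exp_atBot.add tendsto_const_nhds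
      have := this.inv₀ (by simpa using h2)
      simpa [Real.exp_neg] using this
  exact hmain

theorem rare_disease_odds_ratio_limit
    {Ω : Type*} [MeasurableSpace Ω] (μ : Measure Ω) [IsProbabilityMeasure μ]
    (M' M'' : Ω → ℝ) (b : ℝ)
    (hM' : Integrable (fun ω => Real.exp (b * M' ω)) μ)
    (hM'' : Integrable (fun ω => Real.exp (b * M'' ω)) μ)
    (σ : ℝ → ℝ) (hσ : ∀ t, σ t = 1 / (1 + Real.exp (-t)))
    (e' e'' : ℝ → ℝ)
    (he' : ∀ k, e' k = ∫ ω, σ (k + b * M' ω) ∂μ)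
    (he'' : ∀ k, e'' k = ∫ ω, σ (k + b * M'' ω) ∂μ)
    (he'mem : ∀ k, e' k ∈ Set.Ioo (0 : ℝ) 1)
    (he''mem : ∀ k, e'' k ∈ Set.Ioo (0 : ℝ) 1) :
    Tendsto (fun k => (e'' k / (1 - e'' k)) / (e' k / (1 - e' k))) atBot
      (nhds ((∫ ω, Real.exp (b * M'' ω) ∂μ) / (∫ ω, Real.exp (b * M' ω) ∂μ))) := by
  have h1 : Tendsto (fun k => e' k * Real.exp (-k)) atBot
      (nhds (∫ ω, Real.exp (b * M' ω) ∂μ)) := by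
    have := rare_key μ (fun ω => b * M' ω) hM' σ hσ
    simpa [← he'] using this
  have h2 : Tendsto (fun k => e'' k * Real.exp (-k)) atBot
      (nhds (∫ ω, Real.exp (b * M'' ω) ∂μ)) := by
    have := rare_key μ (fun ω => b * M'' ω) hM'' σ hσ
    simpa [← he''] using this
  have hpos : 0 < ∫ ω, Real.exp (b * M' ω) ∂μ := integral_exp_pos hM'
  have hz : ∀ (e : ℝ → ℝ) (L : ℝ), Tendsto (fun k => e k * Real.exp (-k)) atBot (nhds L) →
      Tendsto e atBot (nhds 0) := by
    intro e L h
    have : Tendsto (fun k => e k * Real.exp (-k) * Real.exp k) atBot (nhds (L * 0)) :=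
      h.mul Real.tendsto_exp_atBot
    simpa [mul_assoc, ← Real.exp_add] using this
  have h1z : Tendsto (fun k => 1 - e' k) atBot (nhds 1) := by
    have := (tendsto_const_nhds (x := (1:ℝ)) (f := atBot)).sub (hz e' _ h1)
    simpa using this
  have h2z : Tendsto (fun k => 1 - e'' k) atBot (nhds 1) := by
    have := (tendsto_const_nhds (x := (1:ℝ)) (f := atBot)).sub (hz e'' _ h2)
    simpa using this
  have key : Tendsto (fun k => (e'' k * Real.exp (-k)) / (e' k * Real.exp (-k)) *
      ((1 - e' k) / (1 - e'' k))) atBot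
      (nhds ((∫ ω, Real.exp (b * M'' ω) ∂μ) / (∫ ω, Real.exp (b * M' ω) ∂μ))) := by
    have := (h2.div h1 hpos.ne').mul (h1z.div h2z one_ne_zero)
    simpa using this
  have heqf : ∀ k, (e'' k / (1 - e'' k)) / (e' k / (1 - e' k))
      = (e'' k * Real.exp (-k)) / (e' k * Real.exp (-k)) * ((1 - e' k) / (1 - e'' k)) := by
    intro k
    rw [mul_div_mul_right _ _ (Real.exp_ne_zero _)]
    rw [div_div_div_comm, div_div_eq_mul_div, div_mul_eq_mul_div, mul_div_assoc,
      mul_div_assoc]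
    ring
  simpa only [heqf] using key
end

section
/- Work on a probability space with random variables X (real-valued), M, and a family of counterfactual random variables M^{x} and Y^{x,m} indexed by x, m, all taking values in finite sets. Assume: (i) M^{x'} ⫫ X for all x'; (ii) Y^{x'',m} ⫫ M^{x'} for all x', x'', m; (iii) Y^{x'',m} ⫫ X for all x'', m; (iv) Y^{x'',m} ⫫ M | X for all x'', m; (v) consistency: X = x' implies M^{x'} = M; (vi) consistency: X = x', M = m implies Y^{x',m} = Y. Then E[Y^{x'', M^{x'}}] = Σ_m E[Y | X = x'', M = m] · P(M = m | X = x'), provided P(X = x') > 0, P(X = x'') > 0, and P(X = x'', M = m) > 0 for all m in the support of M^{x'}. -/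
open MeasureTheory ProbabilityTheory
open scoped ENNReal

lemma aux_setIntegral_indep {Ω : Type*} [MeasurableSpace Ω] (ν : Measure Ω)
    [IsProbabilityMeasure ν] {f : Ω → ℝ} (hf : Measurable f) (hfi : Integrable f ν)
    {B : Set Ω} (hB : MeasurableSet B)
    (h : ∀ s : Set ℝ, MeasurableSet s → ν (f ⁻¹' s ∩ B) = ν (f ⁻¹' s) * ν B) :
    ∫ ω in B, f ω ∂ν = (ν B).toReal * ∫ ω, f ω ∂ν := by
  set g : Ω → ℝ := B.indicator (fun _ => (1:ℝ)) with hg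
  have hind : IndepFun f g ν := by
    rw [indepFun_iff_measure_inter_preimage_eq_mul]
    intro s t hs ht
    have hcompl : ν (f ⁻¹' s ∩ Bᶜ) = ν (f ⁻¹' s) * ν Bᶜ := by
      have e1 : ν (f ⁻¹' s ∩ B) + ν (f ⁻¹' s ∩ Bᶜ) = ν (f ⁻¹' s) := by
        have := measure_inter_add_diff (μ := ν) (f ⁻¹' s) hB
        rwa [Set.diff_eq] at this
      have e2 : ν (f ⁻¹' s ∩ B) + ν (f ⁻¹' s) * ν Bᶜ = ν (f ⁻¹' s) := by
        rw [h s hs, ← mul_add, prob_add_prob_compl hB, mul_one]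
      exact (ENNReal.add_right_inj (measure_ne_top ν _)).1 (e1.trans e2.symm)
    have hpre : g ⁻¹' t = Set.univ ∨ g ⁻¹' t = B ∨ g ⁻¹' t = Bᶜ ∨ g ⁻¹' t = ∅ := by
      by_cases h1 : (1:ℝ) ∈ t <;> by_cases h0 : (0:ℝ) ∈ t
      · left; ext ω; by_cases hω : ω ∈ B <;>
          simp [hg, Set.indicator_of_mem, Set.indicator_of_notMem, hω, h1, h0]
      · right; left; ext ω; by_cases hω : ω ∈ B <;>
          simp [hg, Set.indicator_of_mem, Set.indicator_of_notMem, hω, h1, h0]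
      · right; right; left; ext ω; by_cases hω : ω ∈ B <;>
          simp [hg, Set.indicator_of_mem, Set.indicator_of_notMem, hω, h1, h0]
      · right; right; right; ext ω; by_cases hω : ω ∈ B <;>
          simp [hg, Set.indicator_of_mem, Set.indicator_of_notMem, hω, h1, h0]
    rcases hpre with hp | hp | hp | hp <;> rw [hp]
    · simp
    · exact h s hs
    · exact hcompl
    · simp
  have hgi : Integrable g ν := (integrable_const (1:ℝ)).indicator hB
  have hmul := hind.integral_mul_eq_mul_integral hfi.1 hgi.1
  have h1 : ∫ ω, (f * g) ω ∂ν = ∫ ω in B, f ω ∂ν := by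
    rw [← integral_indicator hB]
    congr 1; ext ω
    by_cases hω : ω ∈ B <;>
      simp [hg, Set.indicator_of_mem, Set.indicator_of_notMem, hω]
  have h2 : ∫ ω, g ω ∂ν = (ν B).toReal := by
    rw [hg, integral_indicator_const (1:ℝ) hB]; simp [Measure.real]
  rw [h1, h2] at hmul
  rw [hmul, mul_comm]

lemma aux_setIntegral_indep' {Ω : Type*} [MeasurableSpace Ω] (ν : Measure Ω)
    [IsFiniteMeasure ν] (hν : ν Set.univ ≠ 0) {f : Ω → ℝ} (hf : Measurable f)
    (hfi : Integrable f ν) {B : Set Ω} (hB : MeasurableSet B)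
    (h : ∀ s : Set ℝ, MeasurableSet s →
      ν (f ⁻¹' s ∩ B) * ν Set.univ = ν (f ⁻¹' s) * ν B) :
    (∫ ω in B, f ω ∂ν) * (ν Set.univ).toReal = (ν B).toReal * ∫ ω, f ω ∂ν := by
  set c : ℝ≥0∞ := (ν Set.univ)⁻¹ with hc
  have hctop : c ≠ ⊤ := ENNReal.inv_ne_top.2 hν
  have hcν : c * ν Set.univ = 1 := ENNReal.inv_mul_cancel hν (measure_ne_top ν _)
  set ν' : Measure Ω := c • ν with hν'
  have : IsProbabilityMeasure ν' := ⟨by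
    rw [hν', Measure.smul_apply, smul_eq_mul, hcν]⟩
  have hν'app : ∀ E : Set Ω, ν' E = c * ν E := fun E => rfl
  have key := aux_setIntegral_indep ν' hf (hfi.smul_measure hctop) hB ?_
  · have hrestr : ∀ s : Set Ω, ν'.restrict s = c • ν.restrict s := by
      intro s; rw [hν', Measure.restrict_smul]
    have hu : (0:ℝ) < (ν Set.univ).toReal :=
      ENNReal.toReal_pos hν (measure_ne_top ν _)
    have hcreal : c.toReal = ((ν Set.univ).toReal)⁻¹ := by
      rw [hc, ENNReal.toReal_inv]
    rw [hrestr B] at key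
    rw [integral_smul_measure, integral_smul_measure, hν'app, ENNReal.toReal_mul,
      hcreal] at key
    have hu' : ((ν Set.univ).toReal)⁻¹ ≠ 0 := inv_ne_zero (ne_of_gt hu)
    have key2 : ∫ ω in B, f ω ∂ν =
        (ν B).toReal * (((ν Set.univ).toReal)⁻¹ * ∫ ω, f ω ∂ν) := by
      apply mul_left_cancel₀ hu'
      simpa [smul_eq_mul, mul_comm, mul_left_comm, mul_assoc] using key
    rw [key2]
    field_simp
  · intro s hs
    rw [hν'app, hν'app, hν'app]
    calc c * ν (f ⁻¹' s ∩ B)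
        = c * ν (f ⁻¹' s ∩ B) * (c * ν Set.univ) := by rw [hcν, mul_one]
      _ = (c * c) * (ν (f ⁻¹' s ∩ B) * ν Set.univ) := by ring
      _ = (c * c) * (ν (f ⁻¹' s) * ν B) := by rw [h s hs]
      _ = (c * ν (f ⁻¹' s)) * (c * ν B) := by ring

/-- Mediation identification formula in the discrete counterfactual setting. -/
theorem mediation_identification
    {Ω : Type*} [MeasurableSpace Ω] (μ : Measure Ω) [IsProbabilityMeasure μ]
    {𝓜 : Type*} [Fintype 𝓜] [MeasurableSpace 𝓜] [MeasurableSingletonClass 𝓜]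
    (X : Ω → ℝ) (M : Ω → 𝓜) (Y : Ω → ℝ)
    (Mc : ℝ → Ω → 𝓜) (Yc : ℝ → 𝓜 → Ω → ℝ)
    (hX : Measurable X) (hM : Measurable M) (hY : Measurable Y)
    (hMc : ∀ a, Measurable (Mc a)) (hYc : ∀ a m, Measurable (Yc a m))
    (hYint : Integrable Y μ) (hYcint : ∀ a m, Integrable (Yc a m) μ)
    -- (i) M^{x'} ⫫ X
    (indep₁ : ∀ a, IndepFun (Mc a) X μ)
    -- (ii) Y^{x'',m} ⫫ M^{x'}
    (indep₂ : ∀ a b m, IndepFun (Yc b m) (Mc a) μ)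
    -- (iii) Y^{x'',m} ⫫ X
    (indep₃ : ∀ b m, IndepFun (Yc b m) X μ)
    -- (iv) Y^{x'',m} ⫫ M | X  (elementary product form)
    (indep₄ : ∀ b m (s : Set ℝ), MeasurableSet s → ∀ (m₀ : 𝓜) (x₀ : ℝ),
      μ ({ω | Yc b m ω ∈ s} ∩ {ω | M ω = m₀} ∩ {ω | X ω = x₀}) * μ {ω | X ω = x₀} =
        μ ({ω | Yc b m ω ∈ s} ∩ {ω | X ω = x₀}) * μ ({ω | M ω = m₀} ∩ {ω | X ω = x₀}))
    -- (v) consistency for the mediator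
    (cons₁ : ∀ a ω, X ω = a → Mc a ω = M ω)
    -- (vi) consistency for the outcome
    (cons₂ : ∀ a m ω, X ω = a → M ω = m → Yc a m ω = Y ω)
    (x' x'' : ℝ)
    (hpos' : 0 < μ {ω | X ω = x'}) (hpos'' : 0 < μ {ω | X ω = x''})
    (hpossupp : ∀ m : 𝓜, 0 < μ {ω | Mc x' ω = m} →
      0 < μ {ω | X ω = x'' ∧ M ω = m}) :
    ∫ ω, Yc x'' (Mc x' ω) ω ∂μ =
      ∑ m : 𝓜,
        ((∫ ω in {ω | X ω = x'' ∧ M ω = m}, Y ω ∂μ) /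
            (μ {ω | X ω = x'' ∧ M ω = m}).toReal) *
          ((μ {ω | X ω = x' ∧ M ω = m}).toReal / (μ {ω | X ω = x'}).toReal) := by
  classical
  -- basic measurable sets
  have hA' : MeasurableSet {ω | X ω = x'} := hX (measurableSet_singleton x')
  have hA'' : MeasurableSet {ω | X ω = x''} := hX (measurableSet_singleton x'')
  have hBm : ∀ m : 𝓜, MeasurableSet {ω | M ω = m} :=
    fun m => hM (measurableSet_singleton m)
  have hMcm : ∀ m : 𝓜, MeasurableSet {ω | Mc x' ω = m} :=
    fun m => hMc x' (measurableSet_singleton m)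
  have hS'' : ∀ m : 𝓜, ({ω | X ω = x'' ∧ M ω = m} : Set Ω)
      = {ω | M ω = m} ∩ {ω | X ω = x''} := by
    intro m; ext ω; simp [Set.mem_setOf_eq, and_comm]
  have hS' : ∀ m : 𝓜, ({ω | X ω = x' ∧ M ω = m} : Set Ω)
      = {ω | Mc x' ω = m} ∩ {ω | X ω = x'} := by
    intro m; ext ω
    simp only [Set.mem_setOf_eq, Set.mem_inter_iff]
    constructor
    · rintro ⟨hx, hm⟩; exact ⟨by rw [cons₁ x' ω hx, hm], hx⟩
    · rintro ⟨hm, hx⟩; exact ⟨hx, by rw [← cons₁ x' ω hx, hm]⟩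
  -- Step A: decompose the integral along the values of Mc x'
  have stepA : ∫ ω, Yc x'' (Mc x' ω) ω ∂μ
      = ∑ m : 𝓜, ∫ ω in {ω | Mc x' ω = m}, Yc x'' m ω ∂μ := by
    have hfun : ∀ ω, Yc x'' (Mc x' ω) ω
        = ∑ m : 𝓜, ({ω | Mc x' ω = m} : Set Ω).indicator (Yc x'' m) ω := by
      intro ω
      rw [Finset.sum_eq_single (Mc x' ω)]
      · simp [Set.indicator_apply]
      · intro b _ hb
        have : Mc x' ω ≠ b := Ne.symm hb
        simp [Set.indicator_apply, this]
      · simp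
    calc ∫ ω, Yc x'' (Mc x' ω) ω ∂μ
        = ∫ ω, (∑ m : 𝓜, ({ω | Mc x' ω = m} : Set Ω).indicator (Yc x'' m) ω) ∂μ :=
          integral_congr_ae (Filter.Eventually.of_forall hfun)
      _ = ∑ m : 𝓜, ∫ ω, ({ω | Mc x' ω = m} : Set Ω).indicator (Yc x'' m) ω ∂μ :=
          integral_finset_sum _ (fun m _ => (hYcint x'' m).indicator (hMcm m))
      _ = ∑ m : 𝓜, ∫ ω in {ω | Mc x' ω = m}, Yc x'' m ω ∂μ :=
          Finset.sum_congr rfl (fun m _ => integral_indicator (hMcm m))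
  rw [stepA]
  apply Finset.sum_congr rfl
  intro m _
  by_cases hp : μ {ω | Mc x' ω = m} = 0
  · -- null case: both sides vanish
    have hS'0 : μ {ω | X ω = x' ∧ M ω = m} = 0 := by
      rw [hS' m]
      exact measure_mono_null Set.inter_subset_left hp
    rw [Measure.restrict_eq_zero.mpr hp, integral_zero_measure, hS'0]
    simp
  · have hppos : 0 < μ {ω | Mc x' ω = m} := pos_iff_ne_zero.mpr hp
    have hposS'' : 0 < μ {ω | X ω = x'' ∧ M ω = m} := hpossupp m hppos
    -- LHS via indep₂
    have lhs_eq : ∫ ω in {ω | Mc x' ω = m}, Yc x'' m ω ∂μ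
        = (μ {ω | Mc x' ω = m}).toReal * ∫ ω, Yc x'' m ω ∂μ := by
      apply aux_setIntegral_indep μ (hYc x'' m) (hYcint x'' m) (hMcm m)
      intro s hs
      exact (indep₂ x' x'' m).measure_inter_preimage_eq_mul s {m} hs
        (measurableSet_singleton m)
    -- E[Yc] via indep₃ : ∫ over {X = x''}
    have indep3_eq : ∫ ω in {ω | X ω = x''}, Yc x'' m ω ∂μ
        = (μ {ω | X ω = x''}).toReal * ∫ ω, Yc x'' m ω ∂μ := by
      apply aux_setIntegral_indep μ (hYc x'' m) (hYcint x'' m) hA''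
      intro s hs
      exact (indep₃ x'' m).measure_inter_preimage_eq_mul s {x''} hs
        (measurableSet_singleton x'')
    -- indep₄ on the restricted measure
    have indep4_eq : (∫ ω in {ω | M ω = m} ∩ {ω | X ω = x''}, Yc x'' m ω ∂μ)
          * (μ {ω | X ω = x''}).toReal
        = (μ ({ω | M ω = m} ∩ {ω | X ω = x''})).toReal
          * ∫ ω in {ω | X ω = x''}, Yc x'' m ω ∂μ := by
      have huniv : (μ.restrict {ω | X ω = x''}) Set.univ = μ {ω | X ω = x''} := by
        rw [Measure.restrict_apply MeasurableSet.univ, Set.univ_inter]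
      have hres : ∀ (E : Set Ω), MeasurableSet E →
          (μ.restrict {ω | X ω = x''}) E = μ (E ∩ {ω | X ω = x''}) :=
        fun E hE => Measure.restrict_apply hE
      have key := aux_setIntegral_indep' (μ.restrict {ω | X ω = x''})
        (by rw [huniv]; exact (ne_of_gt hpos'')) (hYc x'' m)
        ((hYcint x'' m).restrict) (hBm m) ?_
      · rw [Measure.restrict_restrict (hBm m)] at key
        rw [huniv, hres _ (hBm m)] at key
        exact key
      · intro s hs
        rw [huniv, hres _ ((hYc x'' m hs).inter (hBm m)), hres _ (hYc x'' m hs),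
          hres _ (hBm m)]
        exact indep₄ x'' m s hs m x''
    -- combine: setIntegral of Yc over S'' equals μ(S'').toReal * E[Yc]
    have hμ''r : (0:ℝ) < (μ {ω | X ω = x''}).toReal :=
      ENNReal.toReal_pos (ne_of_gt hpos'') (measure_ne_top μ _)
    have comb : ∫ ω in {ω | M ω = m} ∩ {ω | X ω = x''}, Yc x'' m ω ∂μ
        = (μ ({ω | M ω = m} ∩ {ω | X ω = x''})).toReal * ∫ ω, Yc x'' m ω ∂μ := by
      apply mul_right_cancel₀ (ne_of_gt hμ''r)
      rw [indep4_eq, indep3_eq]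
      ring
    -- replace Yc by Y on S'' using consistency
    have hconsInt : ∫ ω in {ω | X ω = x'' ∧ M ω = m}, Yc x'' m ω ∂μ
        = ∫ ω in {ω | X ω = x'' ∧ M ω = m}, Y ω ∂μ := by
      apply setIntegral_congr_fun (by rw [hS'' m]; exact (hBm m).inter hA'')
      intro ω hω
      exact cons₂ x'' m ω hω.1 hω.2
    have hEYc : ∫ ω, Yc x'' m ω ∂μ
        = (∫ ω in {ω | X ω = x'' ∧ M ω = m}, Y ω ∂μ)
          / (μ {ω | X ω = x'' ∧ M ω = m}).toReal := by
      have hμS''r : (0:ℝ) < (μ {ω | X ω = x'' ∧ M ω = m}).toReal :=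
        ENNReal.toReal_pos (ne_of_gt hposS'') (measure_ne_top μ _)
      rw [← hconsInt]
      rw [eq_div_iff (ne_of_gt hμS''r)]
      rw [show ({ω | X ω = x'' ∧ M ω = m} : Set Ω)
        = {ω | M ω = m} ∩ {ω | X ω = x''} from hS'' m] at *
      rw [comb]; ring
    -- the mediator-distribution factor
    have hfrac : (μ {ω | X ω = x' ∧ M ω = m}).toReal / (μ {ω | X ω = x'}).toReal
        = (μ {ω | Mc x' ω = m}).toReal := by
      have hm' : μ ({ω | Mc x' ω = m} ∩ {ω | X ω = x'})
          = μ {ω | Mc x' ω = m} * μ {ω | X ω = x'} :=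
        (indep₁ x').measure_inter_preimage_eq_mul {m} {x'}
          (measurableSet_singleton m) (measurableSet_singleton x')
      rw [hS' m, hm', ENNReal.toReal_mul]
      have hμ'r : (0:ℝ) < (μ {ω | X ω = x'}).toReal :=
        ENNReal.toReal_pos (ne_of_gt hpos') (measure_ne_top μ _)
      field_simp
    rw [lhs_eq, hEYc, hfrac]
    ring
end

section
/- In the discrete counterfactual setting with assumptions (i)–(vi) as in the identification theorem, together with the composition axiom Y^{x'} = Y^{x', M^{x'}}, the total effect decomposes as E[Y^{x''}] - E[Y^{x'}] = (E[Y^{x'', M^{x'}}] - E[Y^{x'}]) + (E[Y^{x''}] - E[Y^{x'', M^{x'}}]), i.e., TE(x',x'') = DE(x',x'') + IE(x',x''), and each term is identified: DE(x',x'') = Σ_m (E[Y|X=x'',M=m] - E[Y|X=x',M=m])·P(M=m|X=x') and IE(x',x'') = Σ_m E[Y|X=x'',M=m]·(P(M=m|X=x'') - P(M=m|X=x')). -/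
open MeasureTheory ProbabilityTheory

/-- If an event `A` is independent of the random variable `f`, then the integral of `f`
over `A` is `E[f] * μ A`. -/
lemma integral_restrict_of_indep_event {Ω : Type*} [MeasurableSpace Ω]
    {μ : Measure Ω} [IsProbabilityMeasure μ] {f : Ω → ℝ} {A : Set Ω}
    (hf : Measurable f)
    (h : ∀ s : Set ℝ, MeasurableSet s → μ (f ⁻¹' s ∩ A) = μ (f ⁻¹' s) * μ A) :
    ∫ ω in A, f ω ∂μ = (∫ ω, f ω ∂μ) * (μ A).toReal := by
  have hmap : Measure.map f (μ.restrict A) = (μ A) • Measure.map f μ := by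
    ext s hs
    rw [Measure.map_apply hf hs, Measure.restrict_apply (hf hs), h s hs,
      Measure.smul_apply, Measure.map_apply hf hs, smul_eq_mul, mul_comm]
  calc ∫ ω in A, f ω ∂μ = ∫ x, id x ∂(Measure.map f (μ.restrict A)) := by
        rw [integral_map hf.aemeasurable measurable_id.aestronglyMeasurable]; rfl
    _ = (μ A).toReal * ∫ x, id x ∂(Measure.map f μ) := by
        rw [hmap, integral_smul_measure, smul_eq_mul]
    _ = (μ A).toReal * ∫ ω, f ω ∂μ := by
        rw [integral_map hf.aemeasurable measurable_id.aestronglyMeasurable]; rfl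
    _ = _ := mul_comm _ _

/-- Total effect decomposition TE = DE + IE and identification of the natural
direct and indirect effects in the discrete counterfactual setting. -/
theorem mediation_effect_decomposition
    {Ω : Type*} [MeasurableSpace Ω] (μ : Measure Ω) [IsProbabilityMeasure μ]
    {𝓜 : Type*} [Fintype 𝓜] [MeasurableSpace 𝓜] [MeasurableSingletonClass 𝓜]
    (X : Ω → ℝ) (M : Ω → 𝓜) (Y : Ω → ℝ)
    (Mc : ℝ → Ω → 𝓜) (Yc : ℝ → 𝓜 → Ω → ℝ) (Ycx : ℝ → Ω → ℝ)
    (hX : Measurable X) (hM : Measurable M) (hY : Measurable Y)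
    (hMc : ∀ a, Measurable (Mc a)) (hYc : ∀ a m, Measurable (Yc a m))
    (hYint : Integrable Y μ) (hYcint : ∀ a m, Integrable (Yc a m) μ)
    -- (i) M^{x'} ⫫ X
    (indep₁ : ∀ a, IndepFun (Mc a) X μ)
    -- (ii) Y^{x'',m} ⫫ M^{x'}
    (indep₂ : ∀ a b m, IndepFun (Yc b m) (Mc a) μ)
    -- (iii) Y^{x'',m} ⫫ X
    (indep₃ : ∀ b m, IndepFun (Yc b m) X μ)
    -- (iv) Y^{x'',m} ⫫ M | X  (elementary product form)
    (indep₄ : ∀ b m (s : Set ℝ), MeasurableSet s → ∀ (m₀ : 𝓜) (x₀ : ℝ),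
      μ ({ω | Yc b m ω ∈ s} ∩ {ω | M ω = m₀} ∩ {ω | X ω = x₀}) * μ {ω | X ω = x₀} =
        μ ({ω | Yc b m ω ∈ s} ∩ {ω | X ω = x₀}) * μ ({ω | M ω = m₀} ∩ {ω | X ω = x₀}))
    -- (v) consistency for the mediator
    (cons₁ : ∀ a ω, X ω = a → Mc a ω = M ω)
    -- (vi) consistency for the outcome
    (cons₂ : ∀ a m ω, X ω = a → M ω = m → Yc a m ω = Y ω)
    -- composition: Y^{x} = Y^{x, M^{x}}
    (comp : ∀ a ω, Ycx a ω = Yc a (Mc a ω) ω)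
    (x' x'' : ℝ)
    (hpos' : 0 < μ {ω | X ω = x'}) (hpos'' : 0 < μ {ω | X ω = x''})
    (hposM : ∀ m : 𝓜, 0 < μ {ω | X ω = x' ∧ M ω = m} ∧
      0 < μ {ω | X ω = x'' ∧ M ω = m}) :
    ((∫ ω, Ycx x'' ω ∂μ) - (∫ ω, Ycx x' ω ∂μ) =
        ((∫ ω, Yc x'' (Mc x' ω) ω ∂μ) - (∫ ω, Ycx x' ω ∂μ)) +
          ((∫ ω, Ycx x'' ω ∂μ) - (∫ ω, Yc x'' (Mc x' ω) ω ∂μ))) ∧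
    ((∫ ω, Yc x'' (Mc x' ω) ω ∂μ) - (∫ ω, Ycx x' ω ∂μ) =
        ∑ m : 𝓜,
          (((∫ ω in {ω | X ω = x'' ∧ M ω = m}, Y ω ∂μ) /
              (μ {ω | X ω = x'' ∧ M ω = m}).toReal) -
            ((∫ ω in {ω | X ω = x' ∧ M ω = m}, Y ω ∂μ) /
              (μ {ω | X ω = x' ∧ M ω = m}).toReal)) *
            ((μ {ω | X ω = x' ∧ M ω = m}).toReal / (μ {ω | X ω = x'}).toReal)) ∧
    ((∫ ω, Ycx x'' ω ∂μ) - (∫ ω, Yc x'' (Mc x' ω) ω ∂μ) =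
        ∑ m : 𝓜,
          ((∫ ω in {ω | X ω = x'' ∧ M ω = m}, Y ω ∂μ) /
              (μ {ω | X ω = x'' ∧ M ω = m}).toReal) *
            (((μ {ω | X ω = x'' ∧ M ω = m}).toReal / (μ {ω | X ω = x''}).toReal) -
              ((μ {ω | X ω = x' ∧ M ω = m}).toReal / (μ {ω | X ω = x'}).toReal))) := by
  -- measurability of the basic events
  have hSX : ∀ a : ℝ, {ω | X ω = a} = X ⁻¹' {a} := fun a => by ext ω; simp
  have hSM : ∀ m : 𝓜, {ω | M ω = m} = M ⁻¹' {m} := fun m => by ext ω; simp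
  have hSXM : ∀ (a : ℝ) (m : 𝓜),
      {ω | X ω = a ∧ M ω = m} = X ⁻¹' {a} ∩ M ⁻¹' {m} := fun a m => by ext ω; simp
  have hmX : ∀ a : ℝ, MeasurableSet {ω | X ω = a} := fun a =>
    (hSX a) ▸ hX (measurableSet_singleton a)
  have hmXM : ∀ (a : ℝ) (m : 𝓜), MeasurableSet {ω | X ω = a ∧ M ω = m} := fun a m =>
    (hSXM a m) ▸ ((hX (measurableSet_singleton a)).inter (hM (measurableSet_singleton m)))
  -- identification of E[Y^{b,m}]
  have hEid : ∀ (b : ℝ) (m : 𝓜), 0 < μ {ω | X ω = b} → 0 < μ {ω | X ω = b ∧ M ω = m} →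
      ∫ ω, Yc b m ω ∂μ =
        (∫ ω in {ω | X ω = b ∧ M ω = m}, Y ω ∂μ) / (μ {ω | X ω = b ∧ M ω = m}).toReal := by
    intro b m hb hbm
    set A : Set Ω := {ω | X ω = b ∧ M ω = m} with hAdef
    have hAeq : A = {ω | M ω = m} ∩ {ω | X ω = b} := by ext ω; simp [hAdef, and_comm]
    -- independence of Yc b m from the event A
    have hindA : ∀ s : Set ℝ, MeasurableSet s →
        μ ((Yc b m) ⁻¹' s ∩ A) = μ ((Yc b m) ⁻¹' s) * μ A := by
      intro s hs
      have h4 := indep₄ b m s hs m b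
      have h3 : μ ({ω | Yc b m ω ∈ s} ∩ {ω | X ω = b}) =
          μ {ω | Yc b m ω ∈ s} * μ {ω | X ω = b} := by
        have := (indep₃ b m).measure_inter_preimage_eq_mul s {b} hs
          (measurableSet_singleton b)
        rw [hSX b]; exact this
      have hXne : μ {ω | X ω = b} ≠ 0 := hb.ne'
      have hXnt : μ {ω | X ω = b} ≠ ⊤ := measure_ne_top μ _
      have key : μ ({ω | Yc b m ω ∈ s} ∩ {ω | M ω = m} ∩ {ω | X ω = b}) * μ {ω | X ω = b} =
          (μ {ω | Yc b m ω ∈ s} * μ ({ω | M ω = m} ∩ {ω | X ω = b})) * μ {ω | X ω = b} := by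
        rw [h4, h3]; ring
      have key2 := (ENNReal.mul_left_inj hXne hXnt).mp key
      have hseteq : (Yc b m) ⁻¹' s ∩ A =
          {ω | Yc b m ω ∈ s} ∩ {ω | M ω = m} ∩ {ω | X ω = b} := by
        rw [hAeq]; ext ω; simp [Set.mem_inter_iff, and_assoc]
      rw [hseteq, key2, hAeq]; rfl
    have h1 : ∫ ω in A, Yc b m ω ∂μ = (∫ ω, Yc b m ω ∂μ) * (μ A).toReal :=
      integral_restrict_of_indep_event (hYc b m) hindA
    have h2 : ∫ ω in A, Yc b m ω ∂μ = ∫ ω in A, Y ω ∂μ :=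
      setIntegral_congr_fun (hmXM b m) (fun ω hω => cons₂ b m ω hω.1 hω.2)
    have hApos : (0:ℝ) < (μ A).toReal := ENNReal.toReal_pos hbm.ne' (measure_ne_top μ _)
    rw [← h2, h1]
    field_simp
  -- identification of P(Mc a = m)
  have hPid : ∀ (a : ℝ) (m : 𝓜), 0 < μ {ω | X ω = a} →
      (μ {ω | Mc a ω = m}).toReal =
        (μ {ω | X ω = a ∧ M ω = m}).toReal / (μ {ω | X ω = a}).toReal := by
    intro a m ha
    have hind := (indep₁ a).measure_inter_preimage_eq_mul {m} {a}
      (measurableSet_singleton m) (measurableSet_singleton a)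
    have hseteq : (Mc a) ⁻¹' {m} ∩ X ⁻¹' {a} = {ω | X ω = a ∧ M ω = m} := by
      ext ω
      simp only [Set.mem_inter_iff, Set.mem_preimage, Set.mem_singleton_iff, Set.mem_setOf_eq]
      constructor
      · rintro ⟨h1, h2⟩; exact ⟨h2, by rw [← cons₁ a ω h2]; exact h1⟩
      · rintro ⟨h1, h2⟩; exact ⟨by rw [cons₁ a ω h1]; exact h2, h1⟩
    rw [hseteq] at hind
    have := congrArg ENNReal.toReal hind
    rw [ENNReal.toReal_mul] at this
    have hapos : (0:ℝ) < (μ {ω | X ω = a}).toReal :=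
      ENNReal.toReal_pos ha.ne' (measure_ne_top μ _)
    have hMceq : (Mc a) ⁻¹' {m} = {ω | Mc a ω = m} := by ext ω; simp
    rw [hMceq, ← hSX a] at this
    field_simp
    linarith [this]
  -- the key formula
  have hL : ∀ (a b : ℝ), ∫ ω, Yc b (Mc a ω) ω ∂μ =
      ∑ m : 𝓜, (∫ ω, Yc b m ω ∂μ) * (μ {ω | Mc a ω = m}).toReal := by
    intro a b
    have hfun : ∀ ω, Yc b (Mc a ω) ω =
        ∑ m : 𝓜, Set.indicator ((Mc a) ⁻¹' {m}) (Yc b m) ω := by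
      intro ω
      rw [Finset.sum_eq_single (Mc a ω)]
      · rw [Set.indicator_of_mem (by simp)]
      · intro m _ hm
        rw [Set.indicator_of_notMem (by simp [Ne.symm hm])]
      · simp
    calc ∫ ω, Yc b (Mc a ω) ω ∂μ
        = ∫ ω, ∑ m : 𝓜, Set.indicator ((Mc a) ⁻¹' {m}) (Yc b m) ω ∂μ := by
          exact integral_congr_ae (Filter.Eventually.of_forall hfun)
      _ = ∑ m : 𝓜, ∫ ω, Set.indicator ((Mc a) ⁻¹' {m}) (Yc b m) ω ∂μ :=
          integral_finset_sum _ (fun m _ =>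
            (hYcint b m).indicator (hMc a (measurableSet_singleton m)))
      _ = ∑ m : 𝓜, ∫ ω in (Mc a) ⁻¹' {m}, Yc b m ω ∂μ := by
          refine Finset.sum_congr rfl (fun m _ => ?_)
          exact integral_indicator (hMc a (measurableSet_singleton m))
      _ = ∑ m : 𝓜, (∫ ω, Yc b m ω ∂μ) * (μ {ω | Mc a ω = m}).toReal := by
          refine Finset.sum_congr rfl (fun m _ => ?_)
          have hMceq : (Mc a) ⁻¹' {m} = {ω | Mc a ω = m} := by ext ω; simp
          rw [hMceq]
          refine integral_restrict_of_indep_event (hYc b m) (fun s hs => ?_)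
          have := (indep₂ a b m).measure_inter_preimage_eq_mul s {m} hs
            (measurableSet_singleton m)
          simpa [hMceq] using this
  -- evaluated key formulas
  have hident : ∀ (a b : ℝ), 0 < μ {ω | X ω = a} → 0 < μ {ω | X ω = b} →
      (∀ m : 𝓜, 0 < μ {ω | X ω = a ∧ M ω = m}) →
      (∀ m : 𝓜, 0 < μ {ω | X ω = b ∧ M ω = m}) →
      ∫ ω, Yc b (Mc a ω) ω ∂μ = ∑ m : 𝓜,
        ((∫ ω in {ω | X ω = b ∧ M ω = m}, Y ω ∂μ) / (μ {ω | X ω = b ∧ M ω = m}).toReal) *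
          ((μ {ω | X ω = a ∧ M ω = m}).toReal / (μ {ω | X ω = a}).toReal) := by
    intro a b ha hb haM hbM
    rw [hL a b]
    refine Finset.sum_congr rfl (fun m _ => ?_)
    rw [hEid b m hb (hbM m), hPid a m ha]
  -- integrals of Ycx
  have hYcx : ∀ a : ℝ, ∫ ω, Ycx a ω ∂μ = ∫ ω, Yc a (Mc a ω) ω ∂μ :=
    fun a => integral_congr_ae (Filter.Eventually.of_forall (comp a))
  have h1 := hident x' x' hpos' hpos' (fun m => (hposM m).1) (fun m => (hposM m).1)
  have h2 := hident x' x'' hpos' hpos'' (fun m => (hposM m).1) (fun m => (hposM m).2)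
  have h3 := hident x'' x'' hpos'' hpos'' (fun m => (hposM m).2) (fun m => (hposM m).2)
  refine ⟨by ring, ?_, ?_⟩
  · rw [hYcx x', h2, h1, ← Finset.sum_sub_distrib]
    exact Finset.sum_congr rfl (fun m _ => by ring)
  · rw [hYcx x'', h3, h2, ← Finset.sum_sub_distrib]
    exact Finset.sum_congr rfl (fun m _ => by ring)
end
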